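/- arXiv:1910.11196 — 3 statements merged into one kernel-verified Lean document; each statement's English description precedes it below -/
import Mathlib

section
/- The edge-subgraph expansion formula of Hoede and Li fails in general: for G = K₃ with edge set M = {ab, ac}, one has C(G;x) ≠ C(G−M;x) + Σ_{r=2}^{|M|} (−1)^r Σ_{S ⊆ M, |S| = r(r−1)/2} (r−1) x^r C*(G_S;x). Concretely, the left side is 1 + 3x + 3x² + x³ while the right side is 1 + 3x + 3x² + 2x³. -/
open Polynomial Finset

/-- The clique polynomial `C(G;x) = Σ_k a_k(G) x^k`, where `a_k(G)` is the number of
`k`-cliques of `G` (with `a_0 = 1`). -/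
noncomputable def cliquePoly {V : Type*} [Fintype V] [DecidableEq V]
    (G : SimpleGraph V) [DecidableRel G.Adj] : Polynomial ℤ :=
  ∑ k ∈ Finset.range (Fintype.card V + 1),
    ((G.cliqueFinset k).card : ℤ) • (X : Polynomial ℤ) ^ k

instance {V : Type*} [DecidableEq V] (G : SimpleGraph V) [DecidableRel G.Adj]
    (M : Finset (Sym2 V)) : DecidableRel (G.deleteEdges ↑M).Adj := fun a b =>
  decidable_of_iff (G.Adj a b ∧ ¬ s(a,b) ∈ M) (by simp [SimpleGraph.deleteEdges_adj])

instance {V : Type*} (G : SimpleGraph V) [DecidableRel G.Adj] (s : Set V)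
    [DecidablePred (· ∈ s)] : DecidableRel (G.induce s).Adj :=
  fun a b => ‹DecidableRel G.Adj› a b

/-- The set of endpoints of the edges in `S`. -/
def endpoints {V : Type*} [Fintype V] [DecidableEq V] (S : Finset (Sym2 V)) : Finset V :=
  S.biUnion fun e => Finset.univ.filter (· ∈ e)

/-- The set of common neighbors of all endpoints of edges in `S`;
`G.induce (commonNbrs G S)` is the graph `G_S`. -/
def commonNbrs {V : Type*} (G : SimpleGraph V) (S : Finset (Sym2 V)) : Set V :=
  {v | ∀ e ∈ S, ∀ w ∈ e, G.Adj v w}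

instance {V : Type*} [Fintype V] [DecidableEq V] (G : SimpleGraph V) [DecidableRel G.Adj]
    (S : Finset (Sym2 V)) : DecidablePred (· ∈ commonNbrs G S) := fun v =>
  inferInstanceAs (Decidable (∀ e ∈ S, ∀ w ∈ e, G.Adj v w))

/-- `C*(G_S;x)`: the clique polynomial of `G_S` if `⟨S⟩` is a clique of `G`, else `0`. -/
noncomputable def cstar {V : Type*} [Fintype V] [DecidableEq V]
    (G : SimpleGraph V) [DecidableRel G.Adj] (S : Finset (Sym2 V)) : Polynomial ℤ :=
  if G.IsClique (↑(endpoints S) : Set V) then cliquePoly (G.induce (commonNbrs G S)) else 0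


lemma cstar_single (a b : Fin 3)
    (hc : Fintype.card (↥(commonNbrs (⊤ : SimpleGraph (Fin 3)) {s(a,b)})) = 1)
    (hcl : (⊤ : SimpleGraph (Fin 3)).IsClique (↑(endpoints {s(a,b)}) : Set (Fin 3)))
    (h0 : (((⊤ : SimpleGraph (Fin 3)).induce (commonNbrs ⊤ {s(a,b)})).cliqueFinset 0).card = 1)
    (h1 : (((⊤ : SimpleGraph (Fin 3)).induce (commonNbrs ⊤ {s(a,b)})).cliqueFinset 1).card = 1) :
    cstar (⊤ : SimpleGraph (Fin 3)) {s(a,b)} = 1 + X := by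
  rw [cstar, if_pos hcl, cliquePoly, hc]
  simp only [Finset.sum_range_succ, Finset.sum_range_zero, h0, h1]
  simp

lemma cstar01 : cstar (⊤ : SimpleGraph (Fin 3)) {s((0:Fin 3),1)} = 1 + X :=
  cstar_single 0 1 (by decide) (by decide) (by decide) (by decide)

lemma cstar02 : cstar (⊤ : SimpleGraph (Fin 3)) {s((0:Fin 3),2)} = 1 + X :=
  cstar_single 0 2 (by decide) (by decide) (by decide) (by decide)

lemma cliquePolyTop : cliquePoly (⊤ : SimpleGraph (Fin 3)) = 1 + 3 * X + 3 * X ^ 2 + X ^ 3 := by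
  have h0 : ((⊤ : SimpleGraph (Fin 3)).cliqueFinset 0).card = 1 := by decide
  have h1 : ((⊤ : SimpleGraph (Fin 3)).cliqueFinset 1).card = 3 := by decide
  have h2 : ((⊤ : SimpleGraph (Fin 3)).cliqueFinset 2).card = 3 := by decide
  have h3 : ((⊤ : SimpleGraph (Fin 3)).cliqueFinset 3).card = 1 := by decide
  simp [cliquePoly, Finset.sum_range_succ, h0, h1, h2, h3]

lemma cliquePolyDel :
    cliquePoly ((⊤ : SimpleGraph (Fin 3)).deleteEdges
      ↑({s((0 : Fin 3), 1), s((0 : Fin 3), 2)} : Finset (Sym2 (Fin 3)))) = 1 + 3 * X + X ^ 2 := by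
  set M : Finset (Sym2 (Fin 3)) := {s((0 : Fin 3), 1), s((0 : Fin 3), 2)} with hM
  have h0 : (((⊤ : SimpleGraph (Fin 3)).deleteEdges ↑M).cliqueFinset 0).card = 1 := by decide
  have h1 : (((⊤ : SimpleGraph (Fin 3)).deleteEdges ↑M).cliqueFinset 1).card = 3 := by decide
  have h2 : (((⊤ : SimpleGraph (Fin 3)).deleteEdges ↑M).cliqueFinset 2).card = 1 := by decide
  have h3 : (((⊤ : SimpleGraph (Fin 3)).deleteEdges ↑M).cliqueFinset 3).card = 0 := by decide
  simp [cliquePoly, Finset.sum_range_succ, h0, h1, h2, h3]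

lemma rhs_eq :
    (cliquePoly ((⊤ : SimpleGraph (Fin 3)).deleteEdges
          ↑({s((0 : Fin 3), 1), s((0 : Fin 3), 2)} : Finset (Sym2 (Fin 3)))) +
        ∑ r ∈ Finset.Icc 2 ({s((0 : Fin 3), 1), s((0 : Fin 3), 2)} : Finset (Sym2 (Fin 3))).card,
          ∑ S ∈ ({s((0 : Fin 3), 1), s((0 : Fin 3), 2)} : Finset (Sym2 (Fin 3))).powerset.filter
              (fun S => S.card = r * (r - 1) / 2),
            ((-1 : ℤ) ^ r * ((r : ℤ) - 1)) • ((X : Polynomial ℤ) ^ r *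
              cstar (⊤ : SimpleGraph (Fin 3)) S)) =
      1 + 3 * X + 3 * X ^ 2 + 2 * X ^ 3 := by
  rw [cliquePolyDel]
  have hcard : ({s((0 : Fin 3), 1), s((0 : Fin 3), 2)} : Finset (Sym2 (Fin 3))).card = 2 := by
    decide
  rw [hcard]
  have hIcc : Finset.Icc 2 2 = ({2} : Finset ℕ) := by decide
  rw [hIcc, Finset.sum_singleton]
  have hfilt : ({s((0 : Fin 3), 1), s((0 : Fin 3), 2)} : Finset (Sym2 (Fin 3))).powerset.filter
      (fun S => S.card = 2 * (2 - 1) / 2) =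
      ({{s((0 : Fin 3), 1)}, {s((0 : Fin 3), 2)}} : Finset (Finset (Sym2 (Fin 3)))) := by decide
  rw [hfilt]
  rw [Finset.sum_insert (by decide), Finset.sum_singleton, cstar01, cstar02]
  norm_num
  ring

/-- Counterexample to Hoede–Li's Theorem 3.4: for `G = K₃` and `M = {ab, ac}` the
edge-subgraph expansion fails. -/
theorem stmt2 :
    cliquePoly (⊤ : SimpleGraph (Fin 3)) ≠
      (cliquePoly ((⊤ : SimpleGraph (Fin 3)).deleteEdges
          ↑({s((0 : Fin 3), 1), s((0 : Fin 3), 2)} : Finset (Sym2 (Fin 3)))) +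
        ∑ r ∈ Finset.Icc 2 ({s((0 : Fin 3), 1), s((0 : Fin 3), 2)} : Finset (Sym2 (Fin 3))).card,
          ∑ S ∈ ({s((0 : Fin 3), 1), s((0 : Fin 3), 2)} : Finset (Sym2 (Fin 3))).powerset.filter
              (fun S => S.card = r * (r - 1) / 2),
            ((-1 : ℤ) ^ r * ((r : ℤ) - 1)) • ((X : Polynomial ℤ) ^ r *
              cstar (⊤ : SimpleGraph (Fin 3)) S)) ∧
    cliquePoly (⊤ : SimpleGraph (Fin 3)) = 1 + 3 * X + 3 * X ^ 2 + X ^ 3 ∧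
    (cliquePoly ((⊤ : SimpleGraph (Fin 3)).deleteEdges
          ↑({s((0 : Fin 3), 1), s((0 : Fin 3), 2)} : Finset (Sym2 (Fin 3)))) +
        ∑ r ∈ Finset.Icc 2 ({s((0 : Fin 3), 1), s((0 : Fin 3), 2)} : Finset (Sym2 (Fin 3))).card,
          ∑ S ∈ ({s((0 : Fin 3), 1), s((0 : Fin 3), 2)} : Finset (Sym2 (Fin 3))).powerset.filter
              (fun S => S.card = r * (r - 1) / 2),
            ((-1 : ℤ) ^ r * ((r : ℤ) - 1)) • ((X : Polynomial ℤ) ^ r *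
              cstar (⊤ : SimpleGraph (Fin 3)) S)) =
      1 + 3 * X + 3 * X ^ 2 + 2 * X ^ 3 := by
  refine ⟨?_, cliquePolyTop, rhs_eq⟩
  rw [cliquePolyTop, rhs_eq]
  intro h
  have := congrArg (fun p => Polynomial.coeff p 3) h
  simp at this
end

section
/- Every k-clique of G that is not a k-clique of G − e (for an edge e = uv) contains both u and v, and the map sending such a clique to its intersection with the common neighborhood of u and v is a bijection onto the (k−2)-cliques of G_{e}. -/
open Polynomial Finset

instance {V : Type*} (G : SimpleGraph V) [DecidableRel G.Adj] (u v : V) :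
    DecidablePred (· ∈ ({w | G.Adj u w ∧ G.Adj v w} : Set V)) := fun w =>
  inferInstanceAs (Decidable (G.Adj u w ∧ G.Adj v w))

/-- Every `k`-clique of `G` that is not a `k`-clique of `G − e` contains both `u` and `v`,
and intersecting with the common neighborhood of `u` and `v` is a bijection onto the
`(k−2)`-cliques of `G_e`. -/
theorem stmt7 {V : Type*} [Fintype V] [DecidableEq V] (G : SimpleGraph V) [DecidableRel G.Adj]
    (u v : V) (huv : G.Adj u v) (k : ℕ) (hk : 2 ≤ k) :
    (∀ T ∈ G.cliqueFinset k \
        (G.deleteEdges ↑({s(u, v)} : Finset (Sym2 V))).cliqueFinset k, u ∈ T ∧ v ∈ T) ∧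
    Set.BijOn (fun T : Finset V => T.subtype (· ∈ ({w | G.Adj u w ∧ G.Adj v w} : Set V)))
      ↑(G.cliqueFinset k \ (G.deleteEdges ↑({s(u, v)} : Finset (Sym2 V))).cliqueFinset k)
      ↑((G.induce ({w | G.Adj u w ∧ G.Adj v w} : Set V)).cliqueFinset (k - 2)) := by
  classical
  have hne : u ≠ v := huv.ne
  set P : V → Prop := fun w => G.Adj u w ∧ G.Adj v w with hPdef
  -- characterization of membership in the difference set
  have hdiff : ∀ T : Finset V,
      T ∈ G.cliqueFinset k \ (G.deleteEdges ↑({s(u, v)} : Finset (Sym2 V))).cliqueFinset k ↔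
      (G.IsNClique k T ∧ u ∈ T ∧ v ∈ T) := by
    intro T
    simp only [Finset.mem_sdiff, SimpleGraph.mem_cliqueFinset_iff]
    constructor
    · rintro ⟨⟨hcl, hcard⟩, hnot⟩
      refine ⟨⟨hcl, hcard⟩, ?_⟩
      by_contra h
      apply hnot
      refine ⟨?_, hcard⟩
      intro a ha b hb hab
      rw [SimpleGraph.deleteEdges_adj]
      refine ⟨hcl ha hb hab, ?_⟩
      simp only [Finset.coe_singleton, Set.mem_singleton_iff, Sym2.eq_iff]
      rintro (⟨rfl, rfl⟩ | ⟨rfl, rfl⟩)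
      · exact h ⟨ha, hb⟩
      · exact h ⟨hb, ha⟩
    · rintro ⟨⟨hcl, hcard⟩, hu, hv⟩
      refine ⟨⟨hcl, hcard⟩, fun hcl' => ?_⟩
      have := hcl'.1 hu hv hne
      rw [SimpleGraph.deleteEdges_adj] at this
      exact this.2 (by simp)
  -- filter identity
  have hfilter : ∀ T : Finset V, G.IsNClique k T → u ∈ T → v ∈ T →
      T.filter P = T \ {u, v} := by
    intro T hT hu hv
    ext w
    simp only [Finset.mem_filter, Finset.mem_sdiff, Finset.mem_insert,
      Finset.mem_singleton, hPdef]
    constructor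
    · rintro ⟨hw, hadj⟩
      exact ⟨hw, by rintro (rfl | rfl); exacts [G.irrefl hadj.1, G.irrefl hadj.2]⟩
    · rintro ⟨hw, hne'⟩
      push_neg at hne'
      exact ⟨hw, hT.1 hu hw (Ne.symm hne'.1), hT.1 hv hw (Ne.symm hne'.2)⟩
  have hcardfilter : ∀ T : Finset V, G.IsNClique k T → u ∈ T → v ∈ T →
      (T.filter P).card = k - 2 := by
    intro T hT hu hv
    rw [hfilter T hT hu hv, Finset.card_sdiff_of_subset (by
      intro w hw
      simp only [Finset.mem_insert, Finset.mem_singleton] at hw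
      rcases hw with rfl | rfl <;> assumption)]
    rw [hT.2, Finset.card_insert_of_notMem (by simp [hne]), Finset.card_singleton]
  have hmem := fun T hT => ((hdiff T).mp hT).2
  refine ⟨hmem, ?_, ?_, ?_⟩
  · -- MapsTo
    intro T hT
    simp only [Finset.mem_coe] at hT ⊢
    obtain ⟨hcl, hu, hv⟩ := (hdiff T).mp hT
    rw [SimpleGraph.mem_cliqueFinset_iff]
    constructor
    · intro a ha b hb hab
      simp only [Finset.mem_coe, Finset.mem_subtype] at ha hb
      exact hcl.1 ha hb (fun h => hab (Subtype.ext h))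
    · rw [Finset.card_subtype]
      rw [show Finset.filter (fun x => x ∈ ({w | G.Adj u w ∧ G.Adj v w} : Set V)) T
          = T.filter P from Finset.filter_congr (fun x _ => Iff.rfl)]
      exact hcardfilter T hcl hu hv
  · -- InjOn
    intro T₁ hT₁ T₂ hT₂ heq
    simp only [Finset.mem_coe] at hT₁ hT₂
    obtain ⟨hcl₁, hu₁, hv₁⟩ := (hdiff T₁).mp hT₁
    obtain ⟨hcl₂, hu₂, hv₂⟩ := (hdiff T₂).mp hT₂
    have hf : T₁.filter P = T₂.filter P := by
      rw [← Finset.subtype_map P (s := T₁), ← Finset.subtype_map P (s := T₂)]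
      exact congrArg _ heq
    rw [hfilter T₁ hcl₁ hu₁ hv₁, hfilter T₂ hcl₂ hu₂ hv₂] at hf
    ext w
    by_cases hwu : w = u
    · subst hwu; simp [hu₁, hu₂]
    by_cases hwv : w = v
    · subst hwv; simp [hv₁, hv₂]
    · have := Finset.ext_iff.mp hf w
      simp only [Finset.mem_sdiff, Finset.mem_insert, Finset.mem_singleton] at this
      constructor
      · intro hw; exact (this.mp ⟨hw, by tauto⟩).1
      · intro hw; exact (this.mpr ⟨hw, by tauto⟩).1
  · -- SurjOn
    intro S hS
    simp only [Finset.mem_coe, SimpleGraph.mem_cliqueFinset_iff] at hS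
    set T : Finset V := S.map (Function.Embedding.subtype (· ∈ ({w | G.Adj u w ∧ G.Adj v w} : Set V))) ∪ {u, v} with hTdef
    have hmemT : ∀ w : V, w ∈ T ↔ (∃ a ∈ S, ↑a = w) ∨ w = u ∨ w = v := by
      intro w
      simp only [hTdef, Finset.mem_union, Finset.mem_map, Function.Embedding.coe_subtype,
        Finset.mem_insert, Finset.mem_singleton]
    have hu' : u ∈ T := by rw [hmemT]; tauto
    have hv' : v ∈ T := by rw [hmemT]; tauto
    have hPel : ∀ a : {w // P w}, (↑a : V) ≠ u ∧ (↑a : V) ≠ v := by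
      intro a
      obtain ⟨h1, h2⟩ := a.2
      exact ⟨fun h => G.irrefl (h ▸ h1), fun h => G.irrefl (h ▸ h2)⟩
    have hclT : G.IsNClique k T := by
      constructor
      · intro a ha b hb hab
        simp only [Finset.mem_coe] at ha hb
        rw [hmemT] at ha hb
        rcases ha with ⟨a', ha', rfl⟩ | rfl | rfl <;>
          rcases hb with ⟨b', hb', rfl⟩ | rfl | rfl
        · exact hS.1 ha' hb' (fun h => hab (congrArg _ h))
        · exact a'.2.1.symm
        · exact a'.2.2.symm
        · exact b'.2.1
        · exact absurd rfl hab
        · exact huv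
        · exact b'.2.2
        · exact huv.symm
        · exact absurd rfl hab
      · rw [hTdef, Finset.card_union_of_disjoint, Finset.card_map, hS.2,
          Finset.card_insert_of_notMem (by simp [hne]), Finset.card_singleton]
        · omega
        · rw [Finset.disjoint_right]
          intro w hw
          simp only [Finset.mem_insert, Finset.mem_singleton] at hw
          simp only [Finset.mem_map, Function.Embedding.coe_subtype, not_exists]
          rintro a ⟨ha, rfl⟩
          rcases hw with h | h
          · exact (hPel a).1 h
          · exact (hPel a).2 h
    refine ⟨T, ?_, ?_⟩
    · simp only [Finset.mem_coe]
      exact (hdiff T).mpr ⟨hclT, hu', hv'⟩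
    · ext a
      simp only [Finset.mem_subtype, hmemT]
      constructor
      · rintro (⟨b, hb, hba⟩ | h | h)
        · rwa [← Subtype.coe_injective hba]
        · exact absurd h (hPel a).1
        · exact absurd h (hPel a).2
      · intro ha; exact Or.inl ⟨a, ha, rfl⟩
end

section
/- Let G be a simple graph and M a set of edges whose endpoints induce a clique of G and which contains all edges of that clique. Then C(G;x) = C(G−M;x) + Σ_{r=2}^{p} (−1)^r (r−1) x^r Σ_{S ⊆ M, |S| = r(r−1)/2, ⟨S⟩ an r-clique} C(G_S;x), where p is the number of vertices of the clique induced by M. -/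
open Polynomial Finset

/-! ### Auxiliary arithmetic lemmas -/

lemma altA (t : ℕ) (ht : 2 ≤ t) :
    ∑ r ∈ Finset.range (t+1), (-1:ℤ)^r * r * t.choose r = 0 := by
  obtain ⟨u, rfl⟩ : ∃ u, t = u + 1 := ⟨t - 1, by omega⟩
  rw [Finset.sum_range_succ']
  simp only [Nat.cast_zero, mul_zero, zero_mul, add_zero]
  have key : ∀ k : ℕ, (-1:ℤ)^(k+1) * ((k:ℤ)+1) * ((u+1).choose (k+1)) =
      (-(u+1)) * ((-1:ℤ)^k * (u.choose k)) := by
    intro k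
    have h2 : ((u:ℤ)+1) * u.choose k = ((u+1).choose (k+1)) * ((k:ℤ)+1) := by
      exact_mod_cast congrArg (Nat.cast : ℕ → ℤ) (Nat.add_one_mul_choose_eq u k)
    rw [pow_succ]
    linear_combination ((-1:ℤ)^k) * h2
  have : ∀ k ∈ Finset.range (u+1), (-1:ℤ)^(k+1) * ((k+1 : ℕ):ℤ) * ((u+1).choose (k+1)) =
      (-(u+1)) * ((-1:ℤ)^k * (u.choose k)) := by
    intro k _; push_cast; exact key k
  rw [Finset.sum_congr rfl this, ← Finset.mul_sum, Int.alternating_sum_range_choose]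
  have : u ≠ 0 := by omega
  simp [this]

lemma key_id (t : ℕ) (ht : 2 ≤ t) :
    ∑ r ∈ Finset.Icc 2 t, (-1:ℤ)^r * ((r:ℤ) - 1) * t.choose r = 1 := by
  have h1 : ∑ r ∈ Finset.range (t+1), (-1:ℤ)^r * ((r:ℤ) - 1) * t.choose r = 0 := by
    have hA := altA t ht
    have hB : ∑ r ∈ Finset.range (t+1), (-1:ℤ)^r * t.choose r = 0 :=
      Int.alternating_sum_range_choose_of_ne (by omega)
    calc ∑ r ∈ Finset.range (t+1), (-1:ℤ)^r * ((r:ℤ) - 1) * t.choose r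
        = ∑ r ∈ Finset.range (t+1), ((-1:ℤ)^r * r * t.choose r - (-1:ℤ)^r * t.choose r) := by
          apply Finset.sum_congr rfl; intro r _; ring
      _ = 0 := by rw [Finset.sum_sub_distrib, hA, hB]; ring
  have hrange : Finset.range (t+1) = Finset.Icc 0 t := by
    ext x; simp [Nat.lt_succ_iff]
  rw [hrange] at h1
  have hsplit : Finset.Icc 0 t = insert 0 (insert 1 (Finset.Icc 2 t)) := by
    ext x; simp; omega
  rw [hsplit, Finset.sum_insert (by simp), Finset.sum_insert (by simp)] at h1
  simp at h1
  linarith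

lemma subset_sum {V : Type*} [DecidableEq V] (T : Finset V) :
    ∑ R ∈ T.powerset.filter (fun R => 2 ≤ R.card), ((-1:ℤ)^R.card * ((R.card:ℤ) - 1)) =
      if 2 ≤ T.card then 1 else 0 := by
  have hfc : T.powerset.filter (fun R => 2 ≤ R.card) =
      T.powerset.filter (fun R => R.card ∈ Finset.Icc 2 T.card) := by
    apply Finset.filter_congr
    intro R hR
    rw [Finset.mem_powerset] at hR
    simp [Finset.mem_Icc, Finset.card_le_card hR]
  rw [hfc, ← Finset.sum_fiberwise_eq_sum_filter T.powerset (Finset.Icc 2 T.card)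
    (fun R => R.card) (fun R => ((-1:ℤ)^R.card * ((R.card:ℤ) - 1)))]
  have hinner : ∀ r ∈ Finset.Icc 2 T.card,
      ∑ R ∈ T.powerset.filter (fun R => R.card = r), ((-1:ℤ)^R.card * ((R.card:ℤ) - 1))
        = (-1:ℤ)^r * ((r:ℤ) - 1) * T.card.choose r := by
    intro r hr
    rw [Finset.sum_congr rfl (fun R hR => by
      rw [(Finset.mem_filter.mp hR).2]), Finset.sum_const, ← Finset.powersetCard_eq_filter,
      Finset.card_powersetCard]
    push_cast
    ring
  rw [Finset.sum_congr rfl hinner]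
  by_cases ht : 2 ≤ T.card
  · rw [key_id T.card ht, if_pos ht]
  · rw [if_neg ht, Finset.Icc_eq_empty (by omega), Finset.sum_empty]

/-! ### Clique polynomial as a sum over cliques -/

lemma cliquePoly_eq_sum {V : Type*} [Fintype V] [DecidableEq V]
    (G : SimpleGraph V) [DecidableRel G.Adj] :
    cliquePoly G = ∑ K ∈ (univ : Finset (Finset V)).filter
        (fun K : Finset V => G.IsClique (↑K : Set V)),
      (X : Polynomial ℤ) ^ K.card := by
  rw [cliquePoly,
    ← Finset.sum_fiberwise_of_maps_to (g := fun K : Finset V => K.card)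
      (t := Finset.range (Fintype.card V + 1))
      (fun K _ => by simpa [Nat.lt_succ_iff, ← Finset.card_univ] using Finset.card_le_univ K)]
  refine Finset.sum_congr rfl fun k _ => ?_
  have h : (Finset.univ.filter (fun K : Finset V => G.IsClique (↑K : Set V))).filter
      (fun K => K.card = k) = G.cliqueFinset k := by
    ext K
    simp [SimpleGraph.mem_cliqueFinset_iff, SimpleGraph.isNClique_iff, and_comm]
  rw [← h, Finset.sum_congr rfl (fun K hK => by
    rw [(Finset.mem_filter.mp hK).2]), Finset.sum_const, h]
  simp

lemma cliquePoly_induce {V : Type*} [Fintype V] [DecidableEq V]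
    (G : SimpleGraph V) [DecidableRel G.Adj] (s : Set V) [DecidablePred (· ∈ s)] :
    cliquePoly (G.induce s) =
      ∑ K ∈ (univ : Finset (Finset V)).filter
        (fun K : Finset V => (∀ x ∈ K, x ∈ s) ∧ G.IsClique (↑K : Set V)),
      (X : Polynomial ℤ) ^ K.card := by
  rw [cliquePoly_eq_sum]
  refine Finset.sum_nbij' (i := fun K => K.map (Function.Embedding.subtype _))
    (j := fun K => K.subtype (· ∈ s)) ?_ ?_ ?_ ?_ ?_
  · intro K hK
    simp only [Finset.mem_filter, Finset.mem_univ, true_and] at hK ⊢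
    constructor
    · intro v hv
      simp only [Finset.mem_map, Function.Embedding.coe_subtype] at hv
      obtain ⟨⟨w, hw⟩, _, rfl⟩ := hv
      exact hw
    · intro a ha b hb hab
      simp only [Finset.coe_map, Set.mem_image, Function.Embedding.coe_subtype] at ha hb
      obtain ⟨a', ha', rfl⟩ := ha
      obtain ⟨b', hb', rfl⟩ := hb
      exact hK ha' hb' (fun h => hab (congrArg _ h))
  · intro K hK
    simp only [Finset.mem_filter, Finset.mem_univ, true_and] at hK ⊢
    intro a ha b hb hab
    simp only [Finset.mem_coe, Finset.mem_subtype] at ha hb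
    exact hK.2 (by exact_mod_cast ha) (by exact_mod_cast hb) (by simpa [Subtype.ext_iff] using hab)
  · intro K hK
    ext ⟨v, hv⟩
    simp only [Finset.mem_subtype, Finset.mem_map, Function.Embedding.coe_subtype]
    exact ⟨fun ⟨⟨w,hw⟩, h, he⟩ => by cases he; exact h, fun h => ⟨⟨v, hv⟩, h, rfl⟩⟩
  · intro K hK
    simp only [Finset.mem_filter, Finset.mem_univ, true_and] at hK
    ext v
    simp only [Finset.mem_map, Finset.mem_subtype, Function.Embedding.coe_subtype]
    exact ⟨fun ⟨⟨w, hw⟩, h1, he⟩ => by cases he; exact h1, fun hv => ⟨⟨v, hK.1 v hv⟩, hv, rfl⟩⟩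
  · intro K hK
    rw [Finset.card_map]

/-! ### Edges of a clique -/

section Graph
variable {V : Type*} [Fintype V] [DecidableEq V]

lemma mem_endpoints {S : Finset (Sym2 V)} {v : V} :
    v ∈ endpoints S ↔ ∃ e ∈ S, v ∈ e := by
  simp [endpoints]

lemma endpoints_mono {S T : Finset (Sym2 V)} (h : S ⊆ T) : endpoints S ⊆ endpoints T := by
  intro v hv
  rw [mem_endpoints] at hv ⊢
  obtain ⟨e, he, hve⟩ := hv
  exact ⟨e, h he, hve⟩

lemma filter_mem_pair {a b : V} (hab : a ≠ b) :
    Finset.univ.filter (· ∈ s(a,b)) = {a, b} := by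
  ext v; simp [Sym2.mem_iff]

def edgesIn (G : SimpleGraph V) [DecidableRel G.Adj] (R : Finset V) : Finset (Sym2 V) :=
  G.edgeFinset.filter (fun e => ∀ w ∈ e, w ∈ R)

lemma card_edgesIn (G : SimpleGraph V) [DecidableRel G.Adj] {R : Finset V}
    (hR : G.IsClique (↑R : Set V)) : (edgesIn G R).card = R.card.choose 2 := by
  rw [← Finset.card_powersetCard]
  apply Finset.card_bij (fun e _ => Finset.univ.filter (· ∈ e))
  · intro e he
    simp only [edgesIn, Finset.mem_filter, SimpleGraph.mem_edgeFinset] at he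
    obtain ⟨he1, he2⟩ := he
    induction e with
    | _ a b =>
      have hab : a ≠ b := (SimpleGraph.mem_edgeSet G).mp he1 |>.ne
      rw [filter_mem_pair hab, Finset.mem_powersetCard]
      refine ⟨?_, Finset.card_pair hab⟩
      intro v hv
      rcases Finset.mem_insert.mp hv with rfl | hv
      · exact he2 v (by simp)
      · rw [Finset.mem_singleton] at hv; subst hv; exact he2 v (by simp)
  · intro e₁ h₁ e₂ h₂ heq
    induction e₁ with
    | _ a b =>
      induction e₂ with
      | _ c d =>
        simp only [edgesIn, Finset.mem_filter, SimpleGraph.mem_edgeFinset,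
          SimpleGraph.mem_edgeSet] at h₁ h₂
        have hab : a ≠ b := h₁.1.ne
        have hcd : c ≠ d := h₂.1.ne
        rw [filter_mem_pair hab, filter_mem_pair hcd] at heq
        have hc : c ∈ ({a, b} : Finset V) := heq ▸ by simp
        have hd : d ∈ ({a, b} : Finset V) := heq ▸ by simp
        have ha : a ∈ ({c, d} : Finset V) := heq.symm ▸ by simp
        simp only [Finset.mem_insert, Finset.mem_singleton] at hc hd ha
        rcases hc with rfl | rfl
        · rcases hd with rfl | rfl
          · exact absurd rfl hcd
          · rfl
        · rcases hd with rfl | rfl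
          · exact Sym2.eq_swap
          · rcases ha with rfl | rfl <;> simp_all
  · intro P hP
    rw [Finset.mem_powersetCard] at hP
    obtain ⟨a, b, hab, rfl⟩ := Finset.card_eq_two.mp hP.2
    refine ⟨s(a,b), ?_, filter_mem_pair hab⟩
    simp only [edgesIn, Finset.mem_filter, SimpleGraph.mem_edgeFinset,
      SimpleGraph.mem_edgeSet]
    refine ⟨hR (hP.1 (by simp)) (hP.1 (by simp)) hab, ?_⟩
    intro w hw
    rcases Sym2.mem_iff.mp hw with rfl | rfl
    · exact hP.1 (by simp)
    · exact hP.1 (by simp)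

lemma endpoints_edgesIn (G : SimpleGraph V) [DecidableRel G.Adj] {R : Finset V}
    (hR : G.IsClique (↑R : Set V)) (h2 : 2 ≤ R.card) :
    endpoints (edgesIn G R) = R := by
  apply Finset.Subset.antisymm
  · intro v hv
    rw [mem_endpoints] at hv
    obtain ⟨e, he, hve⟩ := hv
    simp only [edgesIn, Finset.mem_filter] at he
    exact he.2 v hve
  · intro v hv
    obtain ⟨w, hw, hwv⟩ := Finset.exists_mem_ne (s := R) (by omega) v
    rw [mem_endpoints]
    refine ⟨s(v,w), ?_, by simp⟩
    simp only [edgesIn, Finset.mem_filter, SimpleGraph.mem_edgeFinset,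
      SimpleGraph.mem_edgeSet]
    refine ⟨hR hv hw (Ne.symm hwv), ?_⟩
    intro u hu
    rcases Sym2.mem_iff.mp hu with rfl | rfl
    · exact hv
    · exact hw

lemma clique_deleteEdges_iff (G : SimpleGraph V) [DecidableRel G.Adj] (M : Finset (Sym2 V))
    (hall : ∀ e ∈ G.edgeFinset, (∀ w ∈ e, w ∈ endpoints M) → e ∈ M) (K : Finset V) :
    (G.deleteEdges ↑M).IsClique (↑K : Set V) ↔
      G.IsClique (↑K : Set V) ∧ (K ∩ endpoints M).card ≤ 1 := by
  constructor
  · intro h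
    refine ⟨h.mono (G.deleteEdges_le _), ?_⟩
    rw [Finset.card_le_one]
    intro a ha b hb
    by_contra hab
    rw [Finset.mem_inter] at ha hb
    have hadj := h (by exact_mod_cast ha.1) (by exact_mod_cast hb.1) hab
    rw [SimpleGraph.deleteEdges_adj] at hadj
    apply hadj.2
    apply hall
    · rw [SimpleGraph.mem_edgeFinset, SimpleGraph.mem_edgeSet]; exact hadj.1
    · intro w hw
      rcases Sym2.mem_iff.mp hw with rfl | rfl
      · exact ha.2
      · exact hb.2
  · rintro ⟨h, hcard⟩
    intro a ha b hb hab
    rw [SimpleGraph.deleteEdges_adj]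
    refine ⟨h ha hb hab, ?_⟩
    intro hmem
    have hae : a ∈ endpoints M := mem_endpoints.mpr ⟨_, hmem, by simp⟩
    have hbe : b ∈ endpoints M := mem_endpoints.mpr ⟨_, hmem, by simp⟩
    rw [Finset.card_le_one] at hcard
    exact hab (hcard _ (Finset.mem_inter.mpr ⟨by exact_mod_cast ha, hae⟩)
      _ (Finset.mem_inter.mpr ⟨by exact_mod_cast hb, hbe⟩))

/-- The set of cliques of `G` lying in the common neighborhood of all vertices of `R`. -/
def QS (G : SimpleGraph V) [DecidableRel G.Adj] (R : Finset V) : Finset (Finset V) :=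
  Finset.univ.filter (fun Q : Finset V =>
    (∀ x ∈ Q, ∀ w ∈ R, G.Adj x w) ∧ G.IsClique (↑Q : Set V))

lemma cliquePoly_commonNbrs (G : SimpleGraph V) [DecidableRel G.Adj] (S : Finset (Sym2 V)) :
    cliquePoly (G.induce (commonNbrs G S)) =
      ∑ Q ∈ QS G (endpoints S), (X : Polynomial ℤ) ^ Q.card := by
  rw [cliquePoly_induce]
  apply Finset.sum_congr _ (fun _ _ => rfl)
  apply Finset.filter_congr
  intro Q _
  have hmem : ∀ x : V, x ∈ commonNbrs G S ↔ ∀ w ∈ endpoints S, G.Adj x w := by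
    intro x
    constructor
    · intro hx w hw
      obtain ⟨e, he, hwe⟩ := mem_endpoints.mp hw
      exact hx e he w hwe
    · intro hx e he w hwe
      exact hx w (mem_endpoints.mpr ⟨e, he, hwe⟩)
  constructor
  · rintro ⟨h1, h2⟩; exact ⟨fun x hx w hw => (hmem x).mp (h1 x hx) w hw, h2⟩
  · rintro ⟨h1, h2⟩; exact ⟨fun x hx => (hmem x).mpr (h1 x hx), h2⟩

lemma disjoint_of_QS (G : SimpleGraph V) [DecidableRel G.Adj] {R Q : Finset V}
    (hQ : Q ∈ QS G R) : Disjoint R Q := by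
  rw [Finset.disjoint_left]
  intro v hvR hvQ
  simp only [QS, Finset.mem_filter, Finset.mem_univ, true_and] at hQ
  exact G.irrefl (hQ.1 v hvQ v hvR)

lemma union_clique (G : SimpleGraph V) [DecidableRel G.Adj] {R Q : Finset V}
    (hR : G.IsClique (↑R : Set V)) (hQ : Q ∈ QS G R) :
    G.IsClique (↑(R ∪ Q) : Set V) := by
  simp only [QS, Finset.mem_filter, Finset.mem_univ, true_and] at hQ
  intro a ha b hb hab
  simp only [Finset.coe_union, Set.mem_union, Finset.mem_coe] at ha hb
  rcases ha with ha | ha <;> rcases hb with hb | hb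
  · exact hR ha hb hab
  · exact (hQ.1 b hb a ha).symm
  · exact hQ.1 a ha b hb
  · exact hQ.2 ha hb hab

end Graph

/-- Corrected edge-subgraph expansion (polynomial form), valid when `M` consists of all
the edges of a clique of `G` on `p` vertices. -/
theorem stmt11 {V : Type*} [Fintype V] [DecidableEq V] (G : SimpleGraph V) [DecidableRel G.Adj]
    (M : Finset (Sym2 V)) (hM : (↑M : Set (Sym2 V)) ⊆ G.edgeSet)
    (hclique : G.IsClique (↑(endpoints M) : Set V))
    (hall : ∀ e ∈ G.edgeFinset, (∀ w ∈ e, w ∈ endpoints M) → e ∈ M) :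
    cliquePoly G =
      cliquePoly (G.deleteEdges ↑M) +
        ∑ r ∈ Finset.Icc 2 (endpoints M).card,
          ((-1 : ℤ) ^ r * ((r : ℤ) - 1)) • ((X : Polynomial ℤ) ^ r *
            ∑ S ∈ M.powerset.filter
                (fun S => S.card = r * (r - 1) / 2 ∧ G.IsNClique r (endpoints S)),
              cliquePoly (G.induce (commonNbrs G S))) := by
  set P := endpoints M with hPdef
  -- Step 1: the S-sum equals a sum over r-subsets R of P
  have hSsum : ∀ r ∈ Finset.Icc 2 P.card,
      ∑ S ∈ M.powerset.filter
          (fun S => S.card = r * (r - 1) / 2 ∧ G.IsNClique r (endpoints S)),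
        cliquePoly (G.induce (commonNbrs G S))
      = ∑ R ∈ P.powersetCard r, ∑ Q ∈ QS G R, (X : Polynomial ℤ) ^ Q.card := by
    intro r hr
    rw [Finset.mem_Icc] at hr
    refine Finset.sum_nbij' (i := fun S => endpoints S) (j := fun R => edgesIn G R)
      ?_ ?_ ?_ ?_ ?_
    · intro S hS
      simp only [Finset.mem_filter, Finset.mem_powerset] at hS
      rw [Finset.mem_powersetCard]
      exact ⟨endpoints_mono hS.1, hS.2.2.2⟩
    · intro R hR
      rw [Finset.mem_powersetCard] at hR
      have hRclique : G.IsClique (↑R : Set V) := hclique.subset (by exact_mod_cast hR.1)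
      have hcard := card_edgesIn G hRclique
      have hend := endpoints_edgesIn G hRclique (by omega)
      simp only [Finset.mem_filter, Finset.mem_powerset]
      refine ⟨?_, ?_, ?_⟩
      · intro e he
        simp only [edgesIn, Finset.mem_filter] at he
        exact hall e he.1 (fun w hw => hR.1 (he.2 w hw))
      · rw [hcard, hR.2, Nat.choose_two_right]
      · rw [hend]
        exact ⟨hRclique, hR.2⟩
    · intro S hS
      simp only [Finset.mem_filter, Finset.mem_powerset] at hS
      have hsub : S ⊆ edgesIn G (endpoints S) := by
        intro e he
        simp only [edgesIn, Finset.mem_filter, SimpleGraph.mem_edgeFinset]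
        exact ⟨hM (hS.1 he), fun w hw => mem_endpoints.mpr ⟨e, he, hw⟩⟩
      have hcard : (edgesIn G (endpoints S)).card ≤ S.card := by
        rw [card_edgesIn G hS.2.2.1, hS.2.2.2, Nat.choose_two_right, hS.2.1]
      exact (Finset.eq_of_subset_of_card_le hsub hcard).symm
    · intro R hR
      rw [Finset.mem_powersetCard] at hR
      exact endpoints_edgesIn G (hclique.subset (by exact_mod_cast hR.1)) (by omega)
    · intro S hS
      exact cliquePoly_commonNbrs G S
  -- Step 2: delete-edges cliques
  have hdel : (univ : Finset (Finset V)).filter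
      (fun K : Finset V => (G.deleteEdges ↑M).IsClique (↑K : Set V)) =
      ((univ : Finset (Finset V)).filter
        (fun K : Finset V => G.IsClique (↑K : Set V))).filter
        (fun K => (K ∩ P).card ≤ 1) := by
    rw [Finset.filter_filter]
    apply Finset.filter_congr
    intro K _
    exact clique_deleteEdges_iff G M hall K
  -- Step 3: push scalars inside
  have hstep3 : ∀ r ∈ Finset.Icc 2 P.card,
      ((-1 : ℤ) ^ r * ((r : ℤ) - 1)) • ((X : Polynomial ℤ) ^ r *
        ∑ R ∈ P.powersetCard r, ∑ Q ∈ QS G R, (X : Polynomial ℤ) ^ Q.card)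
      = ∑ R ∈ P.powersetCard r, ∑ Q ∈ QS G R,
          ((-1 : ℤ) ^ R.card * ((R.card : ℤ) - 1)) • (X : Polynomial ℤ) ^ ((R ∪ Q).card) := by
    intro r hr
    rw [Finset.mul_sum, Finset.smul_sum]
    apply Finset.sum_congr rfl
    intro R hR
    rw [Finset.mem_powersetCard] at hR
    rw [Finset.mul_sum, Finset.smul_sum]
    apply Finset.sum_congr rfl
    intro Q hQ
    rw [Finset.card_union_of_disjoint (disjoint_of_QS G hQ), hR.2, ← pow_add]
  -- Step 4: merge the r and R sums
  have hmerge : ∑ r ∈ Finset.Icc 2 P.card, ∑ R ∈ P.powersetCard r, (∑ Q ∈ QS G R,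
        ((-1 : ℤ) ^ R.card * ((R.card : ℤ) - 1)) • (X : Polynomial ℤ) ^ ((R ∪ Q).card))
      = ∑ R ∈ P.powerset.filter (fun R => 2 ≤ R.card), ∑ Q ∈ QS G R,
        ((-1 : ℤ) ^ R.card * ((R.card : ℤ) - 1)) • (X : Polynomial ℤ) ^ ((R ∪ Q).card) := by
    simp only [Finset.powersetCard_eq_filter]
    rw [Finset.sum_fiberwise_eq_sum_filter]
    apply Finset.sum_congr _ (fun _ _ => rfl)
    apply Finset.filter_congr
    intro R hR
    rw [Finset.mem_powerset] at hR
    simp [Finset.mem_Icc, Finset.card_le_card hR]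
  -- Step 5: pairs and fibers
  set pairs : Finset (Finset V × Finset V) :=
    (P.powerset ×ˢ (univ : Finset (Finset V))).filter
      (fun z => 2 ≤ z.1.card ∧ z.2 ∈ QS G z.1) with hpairs
  have hpair : ∑ R ∈ P.powerset.filter (fun R => 2 ≤ R.card), ∑ Q ∈ QS G R,
        ((-1 : ℤ) ^ R.card * ((R.card : ℤ) - 1)) • (X : Polynomial ℤ) ^ ((R ∪ Q).card)
      = ∑ z ∈ pairs,
        ((-1 : ℤ) ^ z.1.card * ((z.1.card : ℤ) - 1)) • (X : Polynomial ℤ) ^ ((z.1 ∪ z.2).card) := by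
    rw [Finset.sum_finset_product pairs (P.powerset.filter (fun R => 2 ≤ R.card))
      (fun R => QS G R) (fun z => by
        simp only [hpairs, Finset.mem_filter, Finset.mem_product, Finset.mem_univ,
          true_and, and_true, and_assoc])]
  have hmaps : ∀ z ∈ pairs, z.1 ∪ z.2 ∈ (univ : Finset (Finset V)).filter
      (fun K : Finset V => G.IsClique (↑K : Set V)) := by
    intro z hz
    simp only [hpairs, Finset.mem_filter, Finset.mem_product, Finset.mem_univ, true_and] at hz
    simp only [Finset.mem_filter, Finset.mem_univ, true_and]
    exact union_clique G (hclique.subset (by exact_mod_cast (Finset.mem_powerset.mp hz.1.1)))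
      hz.2.2
  have hfiber : ∀ K ∈ (univ : Finset (Finset V)).filter
      (fun K : Finset V => G.IsClique (↑K : Set V)),
      ∑ z ∈ pairs.filter (fun z => z.1 ∪ z.2 = K),
        ((-1 : ℤ) ^ z.1.card * ((z.1.card : ℤ) - 1)) • (X : Polynomial ℤ) ^ ((z.1 ∪ z.2).card)
      = (if 2 ≤ (K ∩ P).card then (1:ℤ) else 0) • (X : Polynomial ℤ) ^ K.card := by
    intro K hK
    simp only [Finset.mem_filter, Finset.mem_univ, true_and] at hK
    have h1 : ∑ z ∈ pairs.filter (fun z => z.1 ∪ z.2 = K),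
          ((-1 : ℤ) ^ z.1.card * ((z.1.card : ℤ) - 1)) • (X : Polynomial ℤ) ^ ((z.1 ∪ z.2).card)
        = ∑ R ∈ (K ∩ P).powerset.filter (fun R => 2 ≤ R.card),
          ((-1 : ℤ) ^ R.card * ((R.card : ℤ) - 1)) • (X : Polynomial ℤ) ^ K.card := by
      refine Finset.sum_nbij' (i := fun z => z.1) (j := fun R => (R, K \ R)) ?_ ?_ ?_ ?_ ?_
      · intro z hz
        simp only [hpairs, Finset.mem_filter, Finset.mem_product, Finset.mem_univ,
          true_and, and_true] at hz
        simp only [Finset.mem_filter, Finset.mem_powerset]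
        refine ⟨Finset.subset_inter ?_ (Finset.mem_powerset.mp hz.1.1), hz.1.2.1⟩
        rw [← hz.2]
        exact Finset.subset_union_left
      · intro R hR
        simp only [Finset.mem_filter, Finset.mem_powerset] at hR
        have hRK : R ⊆ K := hR.1.trans (Finset.inter_subset_left)
        have hRP : R ⊆ P := hR.1.trans (Finset.inter_subset_right)
        simp only [hpairs, Finset.mem_filter, Finset.mem_product, Finset.mem_univ, true_and,
          and_true]
        refine ⟨⟨Finset.mem_powerset.mpr hRP, hR.2, ?_⟩, Finset.union_sdiff_of_subset hRK⟩
        simp only [QS, Finset.mem_filter, Finset.mem_univ, true_and]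
        constructor
        · intro x hx w hw
          rw [Finset.mem_sdiff] at hx
          exact hK (by exact_mod_cast hx.1) (by exact_mod_cast hRK hw)
            (fun h => hx.2 (h ▸ hw))
        · exact hK.subset (by exact_mod_cast Finset.sdiff_subset)
      · intro z hz
        simp only [hpairs, Finset.mem_filter, Finset.mem_product, Finset.mem_univ,
          true_and, and_true] at hz
        have hdisj : Disjoint z.1 z.2 := disjoint_of_QS G hz.1.2.2
        have hzz : K \ z.1 = z.2 := by
          rw [← hz.2, Finset.union_sdiff_cancel_left hdisj]
        show (z.1, K \ z.1) = z
        exact Prod.ext_iff.mpr ⟨rfl, hzz⟩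
      · intro R hR
        rfl
      · intro z hz
        simp only [Finset.mem_filter] at hz
        rw [hz.2]
    rw [h1, ← Finset.sum_smul, subset_sum (K ∩ P)]
  -- Step 6: the second summand as a sum over cliques
  have hT2 : ∑ r ∈ Finset.Icc 2 P.card,
      ((-1 : ℤ) ^ r * ((r : ℤ) - 1)) • ((X : Polynomial ℤ) ^ r *
        ∑ S ∈ M.powerset.filter
            (fun S => S.card = r * (r - 1) / 2 ∧ G.IsNClique r (endpoints S)),
          cliquePoly (G.induce (commonNbrs G S)))
      = ∑ K ∈ (univ : Finset (Finset V)).filter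
          (fun K : Finset V => G.IsClique (↑K : Set V)),
          (if 2 ≤ (K ∩ P).card then (1:ℤ) else 0) • (X : Polynomial ℤ) ^ K.card := by
    calc ∑ r ∈ Finset.Icc 2 P.card,
        ((-1 : ℤ) ^ r * ((r : ℤ) - 1)) • ((X : Polynomial ℤ) ^ r *
          ∑ S ∈ M.powerset.filter
              (fun S => S.card = r * (r - 1) / 2 ∧ G.IsNClique r (endpoints S)),
            cliquePoly (G.induce (commonNbrs G S)))
        = ∑ r ∈ Finset.Icc 2 P.card, ∑ R ∈ P.powersetCard r, ∑ Q ∈ QS G R,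
            ((-1 : ℤ) ^ R.card * ((R.card : ℤ) - 1)) • (X : Polynomial ℤ) ^ ((R ∪ Q).card) := by
          refine Finset.sum_congr rfl fun r hr => ?_
          rw [hSsum r hr, hstep3 r hr]
      _ = ∑ z ∈ pairs,
            ((-1 : ℤ) ^ z.1.card * ((z.1.card : ℤ) - 1)) •
              (X : Polynomial ℤ) ^ ((z.1 ∪ z.2).card) := by rw [hmerge, hpair]
      _ = ∑ K ∈ (univ : Finset (Finset V)).filter
            (fun K : Finset V => G.IsClique (↑K : Set V)),
            (if 2 ≤ (K ∩ P).card then (1:ℤ) else 0) • (X : Polynomial ℤ) ^ K.card := by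
          rw [← Finset.sum_fiberwise_of_maps_to hmaps]
          exact Finset.sum_congr rfl hfiber
  rw [hT2, cliquePoly_eq_sum G, cliquePoly_eq_sum (G.deleteEdges ↑M), hdel,
    Finset.sum_filter (s := (univ : Finset (Finset V)).filter
      (fun K : Finset V => G.IsClique (↑K : Set V))) (p := fun K => (K ∩ P).card ≤ 1),
    ← Finset.sum_add_distrib]
  apply Finset.sum_congr rfl
  intro K _
  by_cases h2 : 2 ≤ (K ∩ P).card
  · rw [if_pos h2, if_neg (by omega), one_smul, zero_add]
  · rw [if_neg h2, if_pos (by omega), zero_smul, add_zero]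
end
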